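/- Let $T : \mathbb{F}^n \to \mathbb{F}^n$ be a linear map ($\mathbb{F} = \mathbb{R}$ or $\mathbb{C}$) and let $1 \leq p, r < \infty$ with $p \neq r$ and $n \geq 2$. Then $T$ is not an isometry from $\ell^r_n$ to $\ell^p_n$; that is, there exists $x \in \mathbb{F}^n$ with $\|T x\|_p \neq \|x\|_r$. -/

import Mathlib

set_option maxHeartbeats 1000000

open Finset

section IsometryAux

private lemma tangent_upper {x y s : ℝ} (hy : 0 ≤ y) (hyx : y ≤ x) (hs : 1 ≤ s) :
    x ^ s - y ^ s ≤ s * x ^ (s - 1) * (x - y) := by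
  rcases eq_or_lt_of_le (hy.trans hyx) with hx0 | hx0
  · have hx : x = 0 := hx0.symm
    have hy0 : y = 0 := le_antisymm (hx ▸ hyx) hy
    simp [hx, hy0]
  · have hb := one_add_mul_self_le_rpow_one_add (s := y / x - 1) (p := s)
      (by have : 0 ≤ y / x := div_nonneg hy hx0.le; linarith) hs
    rw [show (1 : ℝ) + (y / x - 1) = y / x by ring, Real.div_rpow hy hx0.le] at hb
    have hxs : 0 < x ^ s := Real.rpow_pos_of_pos hx0 s
    have h2 : (1 + s * (y / x - 1)) * x ^ s ≤ y ^ s / x ^ s * x ^ s :=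
      mul_le_mul_of_nonneg_right hb hxs.le
    rw [div_mul_cancel₀ _ hxs.ne'] at h2
    have hxs1 : x ^ (s - 1) * x = x ^ s := by
      rw [← Real.rpow_add_one hx0.ne' (s - 1)]; ring_nf
    have h3 : (y / x - 1) * x = y - x := by field_simp
    have h4 : s * (y / x - 1) * x ^ s = s * (y - x) * x ^ (s - 1) := by
      calc s * (y / x - 1) * x ^ s = s * ((y / x - 1) * x) * x ^ (s - 1) := by
            rw [← hxs1]; ring
        _ = s * (y - x) * x ^ (s - 1) := by rw [h3]
    nlinarith [h2, h4]

private lemma tangent_lower {x y s : ℝ} (hy : 0 ≤ y) (hyx : y ≤ x) (hs : 1 ≤ s) :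
    s * y ^ (s - 1) * (x - y) ≤ x ^ s - y ^ s := by
  rcases eq_or_lt_of_le hy with hy0 | hy0
  · have hy' : y = 0 := hy0.symm
    subst hy'
    rcases eq_or_lt_of_le hs with hs1 | hs1
    · simp [← hs1]
    · rw [Real.zero_rpow (show s - 1 ≠ 0 from by intro h; rw [sub_eq_zero] at h; exact hs1.ne h.symm),
        Real.zero_rpow (show s ≠ 0 from by positivity)]
      simpa using Real.rpow_nonneg (hy.trans hyx) s
  · have hb := one_add_mul_self_le_rpow_one_add (s := x / y - 1) (p := s)
      (by have : 0 ≤ x / y := div_nonneg (hy.trans hyx) hy; linarith) hs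
    rw [show (1 : ℝ) + (x / y - 1) = x / y by ring, Real.div_rpow (hy.trans hyx) hy] at hb
    have hys : 0 < y ^ s := Real.rpow_pos_of_pos hy0 s
    have h2 : (1 + s * (x / y - 1)) * y ^ s ≤ x ^ s / y ^ s * y ^ s :=
      mul_le_mul_of_nonneg_right hb hys.le
    rw [div_mul_cancel₀ _ hys.ne'] at h2
    have hys1 : y ^ (s - 1) * y = y ^ s := by
      rw [← Real.rpow_add_one hy0.ne' (s - 1)]; ring_nf
    have h3 : (x / y - 1) * y = x - y := by field_simp
    have h4 : s * (x / y - 1) * y ^ s = s * (x - y) * y ^ (s - 1) := by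
      calc s * (x / y - 1) * y ^ s = s * ((x / y - 1) * y) * y ^ (s - 1) := by
            rw [← hys1]; ring
        _ = s * (x - y) * y ^ (s - 1) := by rw [h3]
    nlinarith [h2, h4]

private lemma tangent_concave {x y s : ℝ} (hy : 0 < y) (hyx : y ≤ x) (hs0 : 0 ≤ s) (hs1 : s ≤ 1) :
    x ^ s - y ^ s ≤ s * y ^ (s - 1) * (x - y) := by
  have hb := rpow_one_add_le_one_add_mul_self (s := x / y - 1) (p := s)
    (by have : 0 ≤ x / y := div_nonneg (hy.le.trans hyx) hy.le; linarith) hs0 hs1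
  rw [show (1 : ℝ) + (x / y - 1) = x / y by ring, Real.div_rpow (hy.le.trans hyx) hy.le] at hb
  have hys : 0 < y ^ s := Real.rpow_pos_of_pos hy s
  have h2 : x ^ s / y ^ s * y ^ s ≤ (1 + s * (x / y - 1)) * y ^ s :=
    mul_le_mul_of_nonneg_right hb hys.le
  rw [div_mul_cancel₀ _ hys.ne'] at h2
  have hys1 : y ^ (s - 1) * y = y ^ s := by
    rw [← Real.rpow_add_one hy.ne' (s - 1)]; ring_nf
  have h3 : (x / y - 1) * y = x - y := by field_simp
  have h4 : s * (x / y - 1) * y ^ s = s * (x - y) * y ^ (s - 1) := by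
    calc s * (x / y - 1) * y ^ s = s * ((x / y - 1) * y) * y ^ (s - 1) := by
          rw [← hys1]; ring
      _ = s * (x - y) * y ^ (s - 1) := by rw [h3]
  nlinarith [h2, h4]

private lemma lip_rpow {m K x y q : ℝ} (hm : 0 < m) (hq : 0 < q) (hmy : m ≤ y) (hyx : y ≤ x)
    (hxK : x ≤ K) : x ^ q - y ^ q ≤ q * max (K ^ (q - 1)) (m ^ (q - 1)) * (x - y) := by
  have hy0 : 0 < y := hm.trans_le hmy
  rcases le_or_gt 1 q with h1 | h1
  · refine (tangent_upper hy0.le hyx h1).trans ?_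
    have h2 : x ^ (q - 1) ≤ max (K ^ (q - 1)) (m ^ (q - 1)) :=
      (Real.rpow_le_rpow (hy0.le.trans hyx) hxK (by linarith)).trans (le_max_left _ _)
    exact mul_le_mul_of_nonneg_right
      (mul_le_mul_of_nonneg_left h2 hq.le) (sub_nonneg.2 hyx)
  · refine (tangent_concave hy0 hyx hq.le h1.le).trans ?_
    have h2 : y ^ (q - 1) ≤ max (K ^ (q - 1)) (m ^ (q - 1)) :=
      (Real.rpow_le_rpow_of_nonpos hm hmy (by linarith)).trans (le_max_right _ _)
    exact mul_le_mul_of_nonneg_right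
      (mul_le_mul_of_nonneg_left h2 hq.le) (sub_nonneg.2 hyx)

private lemma gap_rpow {M e s m K : ℝ} (hs : 1 < s) (hm : 0 < m) (he : 0 ≤ e)
    (h1 : m ≤ M - e) (h2 : M + e ≤ K) :
    (M + e) ^ s + (M - e) ^ s - 2 * M ^ s
      ≤ 2 * s * ((s - 1) * max (K ^ (s - 2)) (m ^ (s - 2))) * e ^ 2 := by
  have hMe : 0 ≤ M - e := hm.le.trans h1
  have hM : 0 ≤ M := by linarith
  have t1 : (M + e) ^ s - M ^ s ≤ s * (M + e) ^ (s - 1) * e := by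
    have := tangent_upper (x := M + e) (y := M) hM (by linarith) hs.le
    simpa using this
  have t2 : s * (M - e) ^ (s - 1) * e ≤ M ^ s - (M - e) ^ s := by
    have := tangent_lower (x := M) (y := M - e) hMe (by linarith) hs.le
    simpa using this
  have l : (M + e) ^ (s - 1) - (M - e) ^ (s - 1)
      ≤ (s - 1) * max (K ^ (s - 2)) (m ^ (s - 2)) * (2 * e) := by
    have := lip_rpow (q := s - 1) hm (by linarith) h1 (by linarith) h2
    calc (M + e) ^ (s - 1) - (M - e) ^ (s - 1)
        ≤ (s - 1) * max (K ^ (s - 1 - 1)) (m ^ (s - 1 - 1)) * (M + e - (M - e)) := this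
      _ = (s - 1) * max (K ^ (s - 2)) (m ^ (s - 2)) * (2 * e) := by
          rw [show s - 1 - 1 = s - 2 by ring]; ring
  have l2 : s * e * ((M + e) ^ (s - 1) - (M - e) ^ (s - 1))
      ≤ s * e * ((s - 1) * max (K ^ (s - 2)) (m ^ (s - 2)) * (2 * e)) :=
    mul_le_mul_of_nonneg_left l (mul_nonneg (by linarith) he)
  nlinarith [t1, t2, l2]

private lemma sa1 {x y s : ℝ} (hx : 0 ≤ x) (hy : 0 ≤ y) (hs : 1 ≤ s) :
    x ^ s + y ^ s ≤ (x + y) ^ s := by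
  have h := NNReal.add_rpow_le_rpow_add x.toNNReal y.toNNReal hs
  have h2 := NNReal.coe_le_coe.2 h
  push_cast [NNReal.coe_rpow, Real.coe_toNNReal x hx, Real.coe_toNNReal y hy] at h2
  exact h2

private lemma sa2 {x y s : ℝ} (hx : 0 ≤ x) (hy : 0 ≤ y) (hs0 : 0 ≤ s) (hs1 : s ≤ 1) :
    (x + y) ^ s ≤ x ^ s + y ^ s := by
  have h := NNReal.rpow_add_le_add_rpow x.toNNReal y.toNNReal hs0 hs1
  have h2 := NNReal.coe_le_coe.2 h
  push_cast [NNReal.coe_rpow, Real.coe_toNNReal x hx, Real.coe_toNNReal y hy] at h2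
  exact h2

private lemma pm1 {X Y s : ℝ} (hX : 0 ≤ X) (hY : 0 ≤ Y) (hs : 1 ≤ s) :
    ((X + Y) / 2) ^ s ≤ (X ^ s + Y ^ s) / 2 := by
  have h := (convexOn_rpow hs).2 (Set.mem_Ici.2 hX) (Set.mem_Ici.2 hY)
    (by norm_num : (0:ℝ) ≤ 1/2) (by norm_num : (0:ℝ) ≤ 1/2) (by norm_num)
  simp only [smul_eq_mul] at h
  calc ((X + Y) / 2) ^ s = (1/2 * X + 1/2 * Y) ^ s := by ring_nf
    _ ≤ 1/2 * X ^ s + 1/2 * Y ^ s := h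
    _ = (X ^ s + Y ^ s) / 2 := by ring

private lemma pm2 {X Y s : ℝ} (hX : 0 ≤ X) (hY : 0 ≤ Y) (hs0 : 0 ≤ s) (hs1 : s ≤ 1) :
    (X ^ s + Y ^ s) / 2 ≤ ((X + Y) / 2) ^ s := by
  have h := (Real.concaveOn_rpow hs0 hs1).2 (Set.mem_Ici.2 hX) (Set.mem_Ici.2 hY)
    (by norm_num : (0:ℝ) ≤ 1/2) (by norm_num : (0:ℝ) ≤ 1/2) (by norm_num)
  simp only [smul_eq_mul] at h
  calc (X ^ s + Y ^ s) / 2 = 1/2 * X ^ s + 1/2 * Y ^ s := by ring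
    _ ≤ (1/2 * X + 1/2 * Y) ^ s := h
    _ = ((X + Y) / 2) ^ s := by ring_nf

private lemma sq_rpow {x : ℝ} (hx : 0 ≤ x) (p : ℝ) : x ^ p = (x ^ 2) ^ (p / 2) := by
  rw [← Real.rpow_two, ← Real.rpow_mul hx]
  congr 1; ring


variable {𝕜 : Type*} [RCLike 𝕜]

private lemma clarkson_ge {p : ℝ} (hp : 2 ≤ p) (a b : 𝕜) :
    2 * (‖a‖ ^ p + ‖b‖ ^ p) ≤ ‖a + b‖ ^ p + ‖a - b‖ ^ p := by
  have hs : 1 ≤ p / 2 := by linarith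
  have par : ‖a + b‖ ^ 2 + ‖a - b‖ ^ 2 = 2 * (‖a‖ ^ 2 + ‖b‖ ^ 2) := by
    have := parallelogram_law_with_norm 𝕜 a b
    nlinarith [this]
  rw [sq_rpow (norm_nonneg (a + b)) p, sq_rpow (norm_nonneg (a - b)) p,
    sq_rpow (norm_nonneg a) p, sq_rpow (norm_nonneg b) p]
  have hA : (0:ℝ) ≤ ‖a‖ ^ 2 := sq_nonneg _
  have hB : (0:ℝ) ≤ ‖b‖ ^ 2 := sq_nonneg _
  have hX : (0:ℝ) ≤ ‖a + b‖ ^ 2 := sq_nonneg _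
  have hY : (0:ℝ) ≤ ‖a - b‖ ^ 2 := sq_nonneg _
  have h1 : (‖a‖ ^ 2) ^ (p/2) + (‖b‖ ^ 2) ^ (p/2) ≤ (‖a‖ ^ 2 + ‖b‖ ^ 2) ^ (p/2) :=
    sa1 hA hB hs
  have h2 : (‖a‖ ^ 2 + ‖b‖ ^ 2 : ℝ) = (‖a + b‖ ^ 2 + ‖a - b‖ ^ 2) / 2 := by linarith
  have h3 : ((‖a + b‖ ^ 2 + ‖a - b‖ ^ 2) / 2) ^ (p/2)
      ≤ ((‖a + b‖ ^ 2) ^ (p/2) + (‖a - b‖ ^ 2) ^ (p/2)) / 2 := pm1 hX hY hs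
  rw [h2] at h1
  linarith

private lemma clarkson_le {p : ℝ} (hp0 : 0 < p) (hp : p ≤ 2) (a b : 𝕜) :
    ‖a + b‖ ^ p + ‖a - b‖ ^ p ≤ 2 * (‖a‖ ^ p + ‖b‖ ^ p) := by
  have hs0 : (0:ℝ) ≤ p / 2 := by linarith
  have hs1 : p / 2 ≤ 1 := by linarith
  have par : ‖a + b‖ ^ 2 + ‖a - b‖ ^ 2 = 2 * (‖a‖ ^ 2 + ‖b‖ ^ 2) := by
    have := parallelogram_law_with_norm 𝕜 a b
    nlinarith [this]
  rw [sq_rpow (norm_nonneg (a + b)) p, sq_rpow (norm_nonneg (a - b)) p,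
    sq_rpow (norm_nonneg a) p, sq_rpow (norm_nonneg b) p]
  have hA : (0:ℝ) ≤ ‖a‖ ^ 2 := sq_nonneg _
  have hB : (0:ℝ) ≤ ‖b‖ ^ 2 := sq_nonneg _
  have hX : (0:ℝ) ≤ ‖a + b‖ ^ 2 := sq_nonneg _
  have hY : (0:ℝ) ≤ ‖a - b‖ ^ 2 := sq_nonneg _
  have h1 : (‖a‖ ^ 2 + ‖b‖ ^ 2 : ℝ) ^ (p/2) ≤ (‖a‖ ^ 2) ^ (p/2) + (‖b‖ ^ 2) ^ (p/2) :=
    sa2 hA hB hs0 hs1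
  have h2 : (‖a‖ ^ 2 + ‖b‖ ^ 2 : ℝ) = (‖a + b‖ ^ 2 + ‖a - b‖ ^ 2) / 2 := by linarith
  have h3 : ((‖a + b‖ ^ 2) ^ (p/2) + (‖a - b‖ ^ 2) ^ (p/2)) / 2
      ≤ ((‖a + b‖ ^ 2 + ‖a - b‖ ^ 2) / 2) ^ (p/2) := pm2 hX hY hs0 hs1
  rw [h2] at h1
  linarith

private lemma key3 {p : ℝ} (hp : 2 < p) (z w : 𝕜) :
    ∃ C, 0 ≤ C ∧ ∃ δ : ℝ, 0 < δ ∧ δ ≤ 1 ∧ ∀ t : ℝ, 0 < t → t ≤ δ →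
      ‖z + (t : 𝕜) * w‖ ^ p + ‖z - (t : 𝕜) * w‖ ^ p ≤ 2 * ‖z‖ ^ p + C * t ^ 2 := by
  by_cases hz : z = 0
  · refine ⟨2 * ‖w‖ ^ p, by positivity, 1, one_pos, le_refl 1, fun t ht ht1 => ?_⟩
    have hnc : ‖(t : 𝕜) * w‖ = t * ‖w‖ := by
      rw [norm_mul, RCLike.norm_ofReal, abs_of_pos ht]
    have htp : t ^ p ≤ t ^ 2 := by
      rw [← Real.rpow_two]
      exact Real.rpow_le_rpow_of_exponent_ge ht ht1 hp.le
    have hwp : (0:ℝ) ≤ ‖w‖ ^ p := Real.rpow_nonneg (norm_nonneg _) p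
    have h1 : ‖(t:𝕜) * w‖ ^ p = t ^ p * ‖w‖ ^ p := by
      rw [hnc, Real.mul_rpow ht.le (norm_nonneg _)]
    simp only [hz, zero_add, zero_sub, norm_neg, norm_zero]
    rw [Real.zero_rpow (by positivity), h1]
    nlinarith [htp, hwp, Real.rpow_pos_of_pos ht p]
  by_cases hw : w = 0
  · refine ⟨0, le_refl 0, 1, one_pos, le_refl 1, fun t ht ht1 => ?_⟩
    simp [hw]
    linarith [Real.rpow_nonneg (norm_nonneg z) p]
  -- main case
  have hZ : (0:ℝ) < ‖z‖ := norm_pos_iff.2 hz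
  have hW : (0:ℝ) < ‖w‖ := norm_pos_iff.2 hw
  set Z := ‖z‖ with hZdef
  set W := ‖w‖ with hWdef
  set s := p / 2 with hsdef
  have hs1 : 1 < s := by rw [hsdef]; linarith
  set m := Z ^ 2 / 2 with hmdef
  set K := 2 * Z ^ 2 with hKdef
  have hm : 0 < m := by positivity
  have hmaxKm1 : (0:ℝ) ≤ max (K ^ (s - 1)) (m ^ (s - 1)) :=
    (Real.rpow_nonneg (by positivity) _).trans (le_max_left _ _)
  have hmaxKm2 : (0:ℝ) ≤ max (K ^ (s - 2)) (m ^ (s - 2)) :=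
    (Real.rpow_nonneg (by positivity) _).trans (le_max_left _ _)
  set L := s * max (K ^ (s - 1)) (m ^ (s - 1)) with hLdef
  set C1 := 2 * s * ((s - 1) * max (K ^ (s - 2)) (m ^ (s - 2))) with hC1def
  have hL : 0 ≤ L := mul_nonneg (by linarith) hmaxKm1
  have hC1 : 0 ≤ C1 := by
    apply mul_nonneg (by linarith)
    exact mul_nonneg (by linarith) hmaxKm2
  refine ⟨2 * L * W ^ 2 + C1 * (2 * Z * W) ^ 2, by positivity,
    min 1 (Z / (4 * W)), by positivity, min_le_left _ _, fun t ht htδ => ?_⟩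
  have ht1 : t ≤ 1 := htδ.trans (min_le_left _ _)
  have htW : t * W ≤ Z / 4 := by
    have h := htδ.trans (min_le_right _ _)
    rw [le_div_iff₀ (by positivity)] at h
    linarith [mul_le_mul_of_nonneg_right h hW.le]
  set c : 𝕜 := (t : 𝕜) * w with hcdef
  have hc : ‖c‖ = t * W := by
    rw [hcdef, norm_mul, RCLike.norm_ofReal, abs_of_pos ht]
  set D := 2 * RCLike.re (inner 𝕜 z c : 𝕜) with hDdef
  set M := Z ^ 2 + ‖c‖ ^ 2 with hMdef
  have hA : ‖z + c‖ ^ 2 = M + D := by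
    have := @norm_add_sq 𝕜 _ _ _ _ z c
    rw [hMdef, hDdef]; linarith
  have hB : ‖z - c‖ ^ 2 = M - D := by
    have := @norm_sub_sq 𝕜 _ _ _ _ z c
    rw [hMdef, hDdef]; linarith
  have hD : |D| ≤ 2 * (Z * (t * W)) := by
    have h1 : |RCLike.re (inner 𝕜 z c : 𝕜)| ≤ Z * (t * W) := by
      rw [← hc]
      exact (RCLike.abs_re_le_norm _).trans (norm_inner_le_norm z c)
    rw [hDdef, abs_mul, abs_two]
    linarith
  set e := |D| with hedef
  have he0 : 0 ≤ e := abs_nonneg D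
  have hkey : ‖z + c‖ ^ p + ‖z - c‖ ^ p = (M + e) ^ s + (M - e) ^ s := by
    rw [sq_rpow (norm_nonneg (z + c)) p, sq_rpow (norm_nonneg (z - c)) p, hA, hB, ← hsdef]
    rcases abs_cases D with ⟨hh, _⟩ | ⟨hh, _⟩
    · rw [hedef, hh]
    · rw [hedef, hh]
      rw [show M + -D = M - D by ring, show M - -D = M + D by ring, add_comm]
  have htWnn : 0 ≤ t * W := by positivity
  have htW2 : t ^ 2 * W ^ 2 ≤ Z ^ 2 / 16 := by
    nlinarith [mul_le_mul htW htW htWnn (by positivity : (0:ℝ) ≤ Z / 4)]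
  have hc2 : ‖c‖ ^ 2 = t ^ 2 * W ^ 2 := by rw [hc]; ring
  have he2 : e ≤ 2 * Z * (t * W) := by rw [hedef]; linarith [hD]
  have heZ : e ≤ Z ^ 2 / 2 := by
    have := mul_le_mul_of_nonneg_left htW (by positivity : (0:ℝ) ≤ 2 * Z)
    linarith
  have hMl : Z ^ 2 ≤ M := le_add_of_nonneg_right (sq_nonneg _)
  have hMu : M ≤ Z ^ 2 + Z ^ 2 / 16 := by rw [hMdef, hc2]; linarith
  have h1 : m ≤ M - e := by rw [hmdef]; linarith
  have h2 : M + e ≤ K := by rw [hKdef]; linarith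
  have hgap := gap_rpow hs1 hm he0 h1 h2
  rw [← hC1def] at hgap
  have he2sq : e ^ 2 ≤ (2 * Z * W) ^ 2 * t ^ 2 := by
    calc e ^ 2 ≤ (2 * Z * (t * W)) ^ 2 := pow_le_pow_left₀ he0 he2 2
      _ = (2 * Z * W) ^ 2 * t ^ 2 := by ring
  have hmZ : m ≤ Z ^ 2 := by rw [hmdef]; exact half_le_self (sq_nonneg Z)
  have hMK : M ≤ K := by rw [hKdef]; linarith
  have hlip : M ^ s - (Z ^ 2) ^ s ≤ L * (M - Z ^ 2) := by
    have h := lip_rpow (q := s) hm (by linarith) hmZ hMl hMK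
    rw [← hLdef] at h
    exact h
  have hMZ : M - Z ^ 2 = t ^ 2 * W ^ 2 := by rw [hMdef, hc2]; ring
  have hzp : ‖z‖ ^ p = (Z ^ 2) ^ s := by
    rw [← hZdef, sq_rpow hZ.le p, ← hsdef]
  rw [hkey, hzp]
  rw [hMZ] at hlip
  have hprod : C1 * e ^ 2 ≤ C1 * ((2 * Z * W) ^ 2 * t ^ 2) :=
    mul_le_mul_of_nonneg_left he2sq hC1
  calc (M + e) ^ s + (M - e) ^ s
      ≤ 2 * M ^ s + C1 * e ^ 2 := by linarith
    _ ≤ 2 * ((Z ^ 2) ^ s + L * (t ^ 2 * W ^ 2)) + C1 * ((2 * Z * W) ^ 2 * t ^ 2) := by linarith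
    _ = 2 * (Z ^ 2) ^ s + (2 * L * W ^ 2 + C1 * (2 * Z * W) ^ 2) * t ^ 2 := by ring

private lemma sum_norm_pair {n : ℕ} {b : ℝ} (hb : b ≠ 0) {i0 i1 : Fin n} (hne : i0 ≠ i1)
    (d e : 𝕜) :
    ∑ j, ‖Pi.single (M := fun _ : Fin n => 𝕜) i0 d j
        + Pi.single (M := fun _ : Fin n => 𝕜) i1 e j‖ ^ b = ‖d‖ ^ b + ‖e‖ ^ b := by
  have hterm : ∀ j, ‖Pi.single (M := fun _ : Fin n => 𝕜) i0 d j
        + Pi.single (M := fun _ : Fin n => 𝕜) i1 e j‖ ^ b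
      = (if j = i0 then ‖d‖ ^ b else 0) + (if j = i1 then ‖e‖ ^ b else 0) := by
    intro j
    by_cases h0 : j = i0 <;> by_cases h1 : j = i1 <;>
      simp_all [Pi.single_apply, Real.zero_rpow hb]
  rw [Finset.sum_congr rfl (fun j _ => hterm j), Finset.sum_add_distrib,
    Finset.sum_ite_eq' univ i0 (fun _ => ‖d‖ ^ b), Finset.sum_ite_eq' univ i1 (fun _ => ‖e‖ ^ b)]
  simp

private lemma sum_norm_single {n : ℕ} {b : ℝ} (hb : b ≠ 0) (i : Fin n) (d : 𝕜) :
    ∑ j, ‖Pi.single (M := fun _ : Fin n => 𝕜) i d j‖ ^ b = ‖d‖ ^ b := by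
  have hterm : ∀ j, ‖Pi.single (M := fun _ : Fin n => 𝕜) i d j‖ ^ b
      = if j = i then ‖d‖ ^ b else 0 := by
    intro j
    by_cases h0 : j = i <;> simp_all [Pi.single_apply, Real.zero_rpow hb]
  rw [Finset.sum_congr rfl (fun j _ => hterm j), Finset.sum_ite_eq' univ i (fun _ => ‖d‖ ^ b)]
  simp

private lemma emb_lemma {n : ℕ} (hn : 2 ≤ n) {a b : ℝ} (ha : 0 < a) (hb : 0 < b)
    (T' : (Fin n → 𝕜) →ₗ[𝕜] (Fin n → 𝕜))
    (h : ∀ x, (∑ j, ‖T' x j‖ ^ a) ^ (1 / a) = (∑ j, ‖x j‖ ^ b) ^ (1 / b)) :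
    ∃ u v : Fin n → 𝕜, (∀ c : 𝕜, ∑ j, ‖u j + c * v j‖ ^ a = (1 + ‖c‖ ^ b) ^ (a / b))
      ∧ ∑ j, ‖v j‖ ^ a = 1 := by
  have h0 : 0 < n := by omega
  have h1 : 1 < n := by omega
  set i0 : Fin n := ⟨0, h0⟩ with hi0
  set i1 : Fin n := ⟨1, h1⟩ with hi1
  have hne : i0 ≠ i1 := by simp [hi0, hi1, Fin.ext_iff]
  have h' : ∀ x : Fin n → 𝕜, ∑ j, ‖T' x j‖ ^ a = ((∑ j, ‖x j‖ ^ b) ^ (1 / b)) ^ a := by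
    intro x
    have hnn : 0 ≤ ∑ j, ‖T' x j‖ ^ a :=
      Finset.sum_nonneg fun j _ => Real.rpow_nonneg (norm_nonneg _) a
    rw [← h x, one_div, Real.rpow_inv_rpow hnn ha.ne']
  refine ⟨T' (Pi.single i0 1), T' (Pi.single i1 1), fun c => ?_, ?_⟩
  · have hsingle : (Pi.single i1 c : Fin n → 𝕜) = c • (Pi.single i1 (1 : 𝕜) : Fin n → 𝕜) := by
      funext j
      by_cases hj : j = i1 <;> simp [Pi.single_apply, hj]
    have hx : ∀ j, T' ((Pi.single i0 (1:𝕜) : Fin n → 𝕜) + Pi.single i1 c) j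
        = T' (Pi.single i0 1) j + c * T' (Pi.single i1 1) j := by
      intro j
      rw [map_add, hsingle, map_smul]
      simp
    have hh := h' ((Pi.single i0 (1:𝕜) : Fin n → 𝕜) + Pi.single i1 c)
    simp only [Pi.add_apply] at hh
    rw [Finset.sum_congr rfl (fun j _ => by rw [hx j]), sum_norm_pair hb.ne' hne 1 c] at hh
    rw [hh, norm_one, Real.one_rpow, ← Real.rpow_mul (by positivity),
      show 1 / b * a = a / b by ring]
  · rw [h' (Pi.single i1 (1:𝕜)), sum_norm_single hb.ne' i1 (1:𝕜)]
    simp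

private lemma caseC1 {n : ℕ} {a b : ℝ} (ha2 : 2 ≤ a) (hb0 : 0 < b)
    (u v : Fin n → 𝕜)
    (hsum : ∀ c : 𝕜, ∑ j, ‖u j + c * v j‖ ^ a = (1 + ‖c‖ ^ b) ^ (a / b))
    (hv : ∑ j, ‖v j‖ ^ a = 1) : b ≤ a := by
  have ha0 : 0 < a := by linarith
  by_contra hab
  push_neg at hab
  have h0 : ∑ j, ‖u j‖ ^ a = 1 := by
    have := hsum 0
    simpa [Real.zero_rpow hb0.ne'] using this
  have hnorm : ‖(((1:ℝ)/2 : ℝ) : 𝕜)‖ = 1/2 := by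
    rw [RCLike.norm_ofReal]; norm_num
  have hplus := hsum (((1:ℝ)/2 : ℝ) : 𝕜)
  have hminus := hsum (-(((1:ℝ)/2 : ℝ) : 𝕜))
  rw [hnorm] at hplus
  rw [norm_neg, hnorm] at hminus
  have hminus' : ∑ j, ‖u j - (((1:ℝ)/2 : ℝ) : 𝕜) * v j‖ ^ a = (1 + (1/2 : ℝ) ^ b) ^ (a / b) := by
    rw [← hminus]
    congr 1
    funext j
    rw [neg_mul, ← sub_eq_add_neg]
  have hpt : ∀ j ∈ univ, 2 * (‖u j‖ ^ a + ‖(((1:ℝ)/2 : ℝ) : 𝕜) * v j‖ ^ a)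
      ≤ ‖u j + (((1:ℝ)/2 : ℝ) : 𝕜) * v j‖ ^ a + ‖u j - (((1:ℝ)/2 : ℝ) : 𝕜) * v j‖ ^ a :=
    fun j _ => clarkson_ge ha2 _ _
  have hsumineq := Finset.sum_le_sum hpt
  rw [Finset.sum_add_distrib, hplus, hminus'] at hsumineq
  have hvnorm : ∑ j, ‖(((1:ℝ)/2 : ℝ) : 𝕜) * v j‖ ^ a = (1/2 : ℝ) ^ a := by
    have : ∀ j, ‖(((1:ℝ)/2 : ℝ) : 𝕜) * v j‖ ^ a = (1/2 : ℝ) ^ a * ‖v j‖ ^ a := by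
      intro j
      rw [norm_mul, hnorm, Real.mul_rpow (by norm_num) (norm_nonneg _)]
    rw [Finset.sum_congr rfl (fun j _ => this j), ← Finset.mul_sum, hv, mul_one]
  have hlhs : ∑ j, 2 * (‖u j‖ ^ a + ‖(((1:ℝ)/2 : ℝ) : 𝕜) * v j‖ ^ a)
      = 2 * (1 + (1/2 : ℝ) ^ a) := by
    rw [show (fun j => 2 * (‖u j‖ ^ a + ‖(((1:ℝ)/2 : ℝ) : 𝕜) * v j‖ ^ a)) = fun j =>
      2 * ‖u j‖ ^ a + 2 * ‖(((1:ℝ)/2 : ℝ) : 𝕜) * v j‖ ^ a from funext fun j => by ring]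
    rw [Finset.sum_add_distrib, ← Finset.mul_sum, ← Finset.mul_sum, h0, hvnorm]
    ring
  rw [hlhs] at hsumineq
  -- now : 2 * (1 + (1/2)^a) ≤ 2 * (1 + (1/2)^b)^(a/b)
  have hBineq : (1 + (1/2 : ℝ) ^ b) ^ (a / b) ≤ 1 + (a / b) * (1/2 : ℝ) ^ b := by
    have := rpow_one_add_le_one_add_mul_self (s := (1/2 : ℝ) ^ b)
      (by have := Real.rpow_nonneg (by norm_num : (0:ℝ) ≤ 1/2) b; linarith) (p := a / b)
      (by positivity) (le_of_lt ((div_lt_one hb0).2 hab))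
    linarith [this]
  have hmono : ((1:ℝ)/2) ^ b < ((1:ℝ)/2) ^ a :=
    Real.rpow_lt_rpow_of_exponent_gt (by norm_num) (by norm_num) hab
  have habl : (a / b) * (1/2 : ℝ) ^ b ≤ (1/2 : ℝ) ^ b := by
    have h1 : a / b ≤ 1 := le_of_lt ((div_lt_one hb0).2 hab)
    have h2 : (0:ℝ) ≤ (1/2 : ℝ) ^ b := by positivity
    nlinarith
  linarith

private lemma caseC2 {n : ℕ} {a b : ℝ} (ha0 : 0 < a) (ha2 : a ≤ 2) (hb0 : 0 < b)
    (u v : Fin n → 𝕜)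
    (hsum : ∀ c : 𝕜, ∑ j, ‖u j + c * v j‖ ^ a = (1 + ‖c‖ ^ b) ^ (a / b))
    (hv : ∑ j, ‖v j‖ ^ a = 1) : a ≤ b := by
  by_contra hab
  push_neg at hab
  have h0 : ∑ j, ‖u j‖ ^ a = 1 := by
    have := hsum 0
    simpa [Real.zero_rpow hb0.ne'] using this
  have hnorm : ‖(((1:ℝ)/2 : ℝ) : 𝕜)‖ = 1/2 := by
    rw [RCLike.norm_ofReal]; norm_num
  have hplus := hsum (((1:ℝ)/2 : ℝ) : 𝕜)
  have hminus := hsum (-(((1:ℝ)/2 : ℝ) : 𝕜))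
  rw [hnorm] at hplus
  rw [norm_neg, hnorm] at hminus
  have hminus' : ∑ j, ‖u j - (((1:ℝ)/2 : ℝ) : 𝕜) * v j‖ ^ a = (1 + (1/2 : ℝ) ^ b) ^ (a / b) := by
    rw [← hminus]
    congr 1
    funext j
    rw [neg_mul, ← sub_eq_add_neg]
  have hpt : ∀ j ∈ univ, ‖u j + (((1:ℝ)/2 : ℝ) : 𝕜) * v j‖ ^ a
        + ‖u j - (((1:ℝ)/2 : ℝ) : 𝕜) * v j‖ ^ a
      ≤ 2 * (‖u j‖ ^ a + ‖(((1:ℝ)/2 : ℝ) : 𝕜) * v j‖ ^ a) :=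
    fun j _ => clarkson_le ha0 ha2 _ _
  have hsumineq := Finset.sum_le_sum hpt
  rw [Finset.sum_add_distrib, hplus, hminus'] at hsumineq
  have hvnorm : ∑ j, ‖(((1:ℝ)/2 : ℝ) : 𝕜) * v j‖ ^ a = (1/2 : ℝ) ^ a := by
    have : ∀ j, ‖(((1:ℝ)/2 : ℝ) : 𝕜) * v j‖ ^ a = (1/2 : ℝ) ^ a * ‖v j‖ ^ a := by
      intro j
      rw [norm_mul, hnorm, Real.mul_rpow (by norm_num) (norm_nonneg _)]
    rw [Finset.sum_congr rfl (fun j _ => this j), ← Finset.mul_sum, hv, mul_one]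
  have hlhs : ∑ j, 2 * (‖u j‖ ^ a + ‖(((1:ℝ)/2 : ℝ) : 𝕜) * v j‖ ^ a)
      = 2 * (1 + (1/2 : ℝ) ^ a) := by
    rw [show (fun j => 2 * (‖u j‖ ^ a + ‖(((1:ℝ)/2 : ℝ) : 𝕜) * v j‖ ^ a)) = fun j =>
      2 * ‖u j‖ ^ a + 2 * ‖(((1:ℝ)/2 : ℝ) : 𝕜) * v j‖ ^ a from funext fun j => by ring]
    rw [Finset.sum_add_distrib, ← Finset.mul_sum, ← Finset.mul_sum, h0, hvnorm]
    ring
  rw [hlhs] at hsumineq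
  -- now : 2 * (1 + (1/2)^b)^(a/b) ≤ 2 * (1 + (1/2)^a)
  have hBineq : 1 + (a / b) * (1/2 : ℝ) ^ b ≤ (1 + (1/2 : ℝ) ^ b) ^ (a / b) := by
    have := one_add_mul_self_le_rpow_one_add (s := (1/2 : ℝ) ^ b)
      (by have := Real.rpow_nonneg (by norm_num : (0:ℝ) ≤ 1/2) b; linarith) (p := a / b) ((one_le_div hb0).2 hab.le)
    linarith [this]
  have hmono : ((1:ℝ)/2) ^ a < ((1:ℝ)/2) ^ b :=
    Real.rpow_lt_rpow_of_exponent_gt (by norm_num) (by norm_num) hab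
  have habl : (1/2 : ℝ) ^ b ≤ (a / b) * (1/2 : ℝ) ^ b := by
    have h1 : 1 ≤ a / b := (one_le_div hb0).2 hab.le
    have h2 : (0:ℝ) ≤ (1/2 : ℝ) ^ b := by positivity
    nlinarith
  linarith

private lemma caseC3 {n : ℕ} (hn : 0 < n) {a b : ℝ} (ha : 2 < a) (hb0 : 0 < b) (hb2 : b < 2)
    (u v : Fin n → 𝕜)
    (hsum : ∀ c : 𝕜, ∑ j, ‖u j + c * v j‖ ^ a = (1 + ‖c‖ ^ b) ^ (a / b)) : False := by
  have hba : b < a := by linarith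
  have h0 : ∑ j, ‖u j‖ ^ a = 1 := by
    have := hsum 0
    simpa [Real.zero_rpow hb0.ne'] using this
  choose C hC δ hδ0 hδ1 hkey using fun j => key3 ha (u j) (v j)
  haveI : Nonempty (Fin n) := Fin.pos_iff_nonempty.mp hn
  set δm := Finset.univ.inf' Finset.univ_nonempty δ with hδm
  have hδm0 : 0 < δm := by
    rw [hδm, Finset.lt_inf'_iff]
    exact fun j _ => hδ0 j
  set Ct := ∑ j, C j with hCt
  have hCt0 : 0 ≤ Ct := Finset.sum_nonneg fun j _ => hC j
  set t := min δm ((Ct + 1)⁻¹ ^ (1 / (2 - b))) with htdef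
  have ht0 : 0 < t := by
    apply lt_min hδm0
    positivity
  have htj : ∀ j, t ≤ δ j := fun j =>
    (min_le_left _ _).trans (Finset.inf'_le δ (Finset.mem_univ j))
  have htnorm : ‖((t : ℝ) : 𝕜)‖ = t := by rw [RCLike.norm_ofReal, abs_of_pos ht0]
  have hplus := hsum ((t : ℝ) : 𝕜)
  have hminus := hsum (-((t : ℝ) : 𝕜))
  rw [htnorm] at hplus
  rw [norm_neg, htnorm] at hminus
  have hminus' : ∑ j, ‖u j - ((t:ℝ) : 𝕜) * v j‖ ^ a = (1 + t ^ b) ^ (a / b) := by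
    rw [← hminus]
    congr 1
    funext j
    rw [neg_mul, ← sub_eq_add_neg]
  have hpt : ∀ j ∈ univ, ‖u j + ((t:ℝ) : 𝕜) * v j‖ ^ a + ‖u j - ((t:ℝ) : 𝕜) * v j‖ ^ a
      ≤ 2 * ‖u j‖ ^ a + C j * t ^ 2 :=
    fun j _ => hkey j t ht0 (htj j)
  have hsumineq := Finset.sum_le_sum hpt
  rw [Finset.sum_add_distrib, hplus, hminus', Finset.sum_add_distrib,
    ← Finset.mul_sum, h0, ← Finset.sum_mul, ← hCt] at hsumineq
  -- hsumineq : 2 * (1 + t^b)^(a/b) ≤ 2 * 1 + Ct * t^2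
  have hbern : 1 + t ^ b ≤ (1 + t ^ b) ^ (a / b) := by
    have h1 := one_add_mul_self_le_rpow_one_add (s := t ^ b)
      (by have := Real.rpow_nonneg ht0.le b; linarith) (p := a / b)
      ((one_le_div hb0).2 hba.le)
    have h2 : t ^ b ≤ (a / b) * t ^ b := by
      have h3 : 1 ≤ a / b := (one_le_div hb0).2 hba.le
      have h4 : (0:ℝ) ≤ t ^ b := Real.rpow_nonneg ht0.le b
      nlinarith
    linarith
  have hfin : 2 * t ^ b ≤ Ct * t ^ 2 := by linarith
  -- t^2 = t^b * t^(2-b)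
  have ht2 : (t:ℝ) ^ (2:ℕ) = t ^ b * t ^ (2 - b) := by
    rw [← Real.rpow_natCast t 2, ← Real.rpow_add ht0]
    norm_num
  have htb : 0 < t ^ b := Real.rpow_pos_of_pos ht0 b
  have h2fin : 2 ≤ Ct * t ^ (2 - b) := by
    rw [ht2] at hfin
    have := le_of_mul_le_mul_right (by linarith [hfin] : 2 * t ^ b ≤ (Ct * t ^ (2 - b)) * t ^ b) htb
    linarith
  have hsmall : t ^ (2 - b) ≤ (Ct + 1)⁻¹ := by
    have h1 : t ≤ (Ct + 1)⁻¹ ^ (1 / (2 - b)) := min_le_right _ _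
    have h2 : t ^ (2 - b) ≤ ((Ct + 1)⁻¹ ^ (1 / (2 - b))) ^ (2 - b) :=
      Real.rpow_le_rpow ht0.le h1 (by linarith)
    rw [← Real.rpow_mul (by positivity), one_div, inv_mul_cancel₀ (by linarith : 2 - b ≠ 0),
      Real.rpow_one] at h2
    exact h2
  have hlast : Ct * t ^ (2 - b) ≤ Ct * (Ct + 1)⁻¹ :=
    mul_le_mul_of_nonneg_left hsmall hCt0
  have : Ct * (Ct + 1)⁻¹ < 1 := by
    rw [← div_eq_mul_inv, div_lt_one (by linarith)]
    linarith
  linarith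

end IsometryAux

theorem stmt_17 (𝕜 : Type*) [RCLike 𝕜] (n : ℕ) (hn : 2 ≤ n)
    (p r : ℝ) (hp : 1 ≤ p) (hr : 1 ≤ r) (hpr : p ≠ r)
    (T : (Fin n → 𝕜) →ₗ[𝕜] (Fin n → 𝕜)) :
    ∃ x : Fin n → 𝕜, (∑ j, ‖T x j‖ ^ p) ^ (1 / p) ≠ (∑ j, ‖x j‖ ^ r) ^ (1 / r) := by
  by_contra hcon
  push_neg at hcon
  have hp0 : 0 < p := by linarith
  have hr0 : 0 < r := by linarith
  obtain ⟨u, v, hsum1, hv1⟩ := emb_lemma hn hp0 hr0 T hcon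
  have hinj : Function.Injective T := by
    rw [injective_iff_map_eq_zero]
    intro x hTx
    have hx := hcon x
    rw [hTx] at hx
    have hzero : (∑ j, ‖(0 : Fin n → 𝕜) j‖ ^ p) = 0 := by
      simp [Real.zero_rpow hp0.ne']
    rw [hzero, Real.zero_rpow (by positivity : 1 / p ≠ 0)] at hx
    have hsnn : 0 ≤ ∑ j, ‖x j‖ ^ r :=
      Finset.sum_nonneg fun j _ => Real.rpow_nonneg (norm_nonneg _) r
    have hs0 : ∑ j, ‖x j‖ ^ r = 0 := by
      have := (Real.rpow_eq_zero_iff_of_nonneg hsnn).mp hx.symm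
      exact this.1
    funext j
    have hj := (Finset.sum_eq_zero_iff_of_nonneg
      (fun j _ => Real.rpow_nonneg (norm_nonneg _) r)).mp hs0 j (Finset.mem_univ j)
    have := (Real.rpow_eq_zero_iff_of_nonneg (norm_nonneg (x j))).mp hj
    simpa using norm_eq_zero.mp this.1
  have hsurj : Function.Surjective T :=
    (LinearMap.injective_iff_surjective_of_finrank_eq_finrank rfl).mp hinj
  set E := LinearEquiv.ofBijective T ⟨hinj, hsurj⟩ with hE
  set S : (Fin n → 𝕜) →ₗ[𝕜] (Fin n → 𝕜) := (E.symm : (Fin n → 𝕜) ≃ₗ[𝕜] (Fin n → 𝕜)).toLinearMap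
    with hS
  have hTS : ∀ y, T (S y) = y := by
    intro y
    have h1 : S y = E.symm y := rfl
    have h2 : T (E.symm y) = E (E.symm y) := (LinearEquiv.ofBijective_apply _ _).symm
    rw [h1, h2, LinearEquiv.apply_symm_apply]
  have hcon2 : ∀ y, (∑ j, ‖S y j‖ ^ r) ^ (1 / r) = (∑ j, ‖y j‖ ^ p) ^ (1 / p) := by
    intro y
    have := hcon (S y)
    rw [hTS y] at this
    exact this.symm
  obtain ⟨u', v', hsum2, hv2⟩ := emb_lemma hn hr0 hp0 S hcon2
  have hnpos : 0 < n := by omega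
  rcases le_or_gt p 2 with hp2 | hp2 <;> rcases le_or_gt r 2 with hr2 | hr2
  · exact hpr (le_antisymm (caseC2 hp0 hp2 hr0 u v hsum1 hv1)
      (caseC2 hr0 hr2 hp0 u' v' hsum2 hv2))
  · rcases eq_or_lt_of_le hp2 with hp2' | hp2'
    · have := caseC1 (le_of_eq hp2'.symm) hr0 u v hsum1 hv1
      linarith
    · exact caseC3 hnpos hr2 hp0 hp2' u' v' hsum2
  · rcases eq_or_lt_of_le hr2 with hr2' | hr2'
    · have := caseC1 (le_of_eq hr2'.symm) hp0 u' v' hsum2 hv2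
      linarith
    · exact caseC3 hnpos hp2 hr0 hr2' u v hsum1
  · exact hpr (le_antisymm (caseC1 hr2.le hp0 u' v' hsum2 hv2)
      (caseC1 hp2.le hr0 u v hsum1 hv1))
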